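/- For every h < 8, no h-HAM system near-perfectly assembles the discrete Sierpinski carpet C_∞ with respect to its stage sequence C_0 ⊆ C_1 ⊆ C_2 ⊆ ⋯; that is, at least 8 hands are required for near-perfect assembly of the Sierpinski carpet. -/

import Mathlib

/-- A tile type: one glue (a natural number) per side. Glue 0 is the null glue. -/
structure Tile where
  north : ℕ
  east : ℕ
  south : ℕ
  west : ℕ
deriving DecidableEq

/-- An assembly: a nonempty finite set of positions in ℤ², each carrying a tile.
(The `tile` function is only meaningful on `dom`.) -/
structure Assembly where
  dom : Finset (ℤ × ℤ)
  tile : ℤ × ℤ → Tile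
  nonempty : dom.Nonempty

/-- The translation of an assembly by a vector `v`. -/
def Assembly.translate (A : Assembly) (v : ℤ × ℤ) : Assembly where
  dom := A.dom.image (· + v)
  tile := fun p => A.tile (p - v)
  nonempty := A.nonempty.image _

/-- Interaction strength between a tile `t` at position `p` and a tile `u` at
position `p + d`: the strength of the common glue on the abutting sides if the
glues match, and `0` otherwise (also `0` if the positions are not adjacent). -/
def bondStrength (str : ℕ → ℕ) (t u : Tile) (d : ℤ × ℤ) : ℕ :=
  if d = (1, 0) then (if t.east = u.west then str t.east else 0)
  else if d = (-1, 0) then (if t.west = u.east then str t.west else 0)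
  else if d = (0, 1) then (if t.north = u.south then str t.north else 0)
  else if d = (0, -1) then (if t.south = u.north then str t.south else 0)
  else 0

/-- The total strength of the bonds crossing the cut `(P, Q)` of an assembly. -/
def cutStrength (str : ℕ → ℕ) (A : Assembly) (P Q : Finset (ℤ × ℤ)) : ℕ :=
  ∑ p ∈ P, ∑ q ∈ Q, bondStrength str (A.tile p) (A.tile q) (q - p)

/-- An assembly is `τ`-stable if every partition of its domain into two nonempty
parts is crossed by bonds of total strength at least `τ`. -/
def IsStable (str : ℕ → ℕ) (τ : ℕ) (A : Assembly) : Prop :=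
  ∀ P Q : Finset (ℤ × ℤ), P.Nonempty → Q.Nonempty → Disjoint P Q → P ∪ Q = A.dom →
    τ ≤ cutStrength str A P Q

/-- `Combines L C` : the assemblies in the list `L` have pairwise disjoint domains
and `C` is their union. -/
def Combines (L : List Assembly) (C : Assembly) : Prop :=
  List.Pairwise (fun A B => Disjoint A.dom B.dom) L ∧
  (∀ p ∈ C.dom, ∃ A ∈ L, p ∈ A.dom) ∧
  (∀ A ∈ L, A.dom ⊆ C.dom ∧ ∀ p ∈ A.dom, C.tile p = A.tile p)

/-- Producible assemblies of the `h`-HAM system `(T, τ, h)` (with glue strengths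
`str`): the least set of assemblies containing every single tile of `T` placed at
any position of ℤ², and closed under taking `τ`-stable unions of at most `h`
suitably translated producible assemblies with pairwise disjoint domains. -/
inductive HamProducible (T : Finset Tile) (str : ℕ → ℕ) (τ h : ℕ) : Assembly → Prop
  | single (t : Tile) (ht : t ∈ T) (p : ℤ × ℤ) :
      HamProducible T str τ h ⟨{p}, fun _ => t, Finset.singleton_nonempty p⟩
  | combine (L : List (Assembly × (ℤ × ℤ))) (C : Assembly) :
      L.length ≤ h →
      (∀ x ∈ L, HamProducible T str τ h x.1) →
      Combines (L.map fun x => x.1.translate x.2) C →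
      IsStable str τ C →
      HamProducible T str τ h C

/-- The `h`-HAM system `(T, τ, h)` (finitely) self-assembles the shape `X ⊆ ℤ²`:
every producible assembly `A` admits an infinite sequence of producible
assemblies starting at `A`, each obtained from the previous one as a `τ`-stable
union with at most `h - 1` other (suitably translated) producible assemblies,
whose domains union to exactly a translate of `X`. -/
def SelfAssembles (T : Finset Tile) (str : ℕ → ℕ) (τ h : ℕ) (X : Set (ℤ × ℤ)) : Prop :=
  ∀ A, HamProducible T str τ h A →
    ∃ seq : ℕ → Assembly, seq 0 = A ∧
      (∀ n, HamProducible T str τ h (seq n)) ∧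
      (∀ n, ∃ L : List (Assembly × (ℤ × ℤ)), L.length ≤ h - 1 ∧
        (∀ x ∈ L, HamProducible T str τ h x.1) ∧
        Combines (seq n :: L.map fun x => x.1.translate x.2) (seq (n + 1)) ∧
        IsStable str τ (seq (n + 1))) ∧
      ∃ v : ℤ × ℤ, (⋃ n, ((seq n).dom : Set (ℤ × ℤ))) = (· + v) '' X

/-- The `h`-HAM system `(T, τ, h)` near-perfectly assembles the fractal with
increasing stage sequence `P 0 ⊆ P 1 ⊆ ⋯`: it self-assembles `⋃ i, P i`, and
(1) for some constant `c`, every stage `P i` is matched, up to translation, by a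
producible assembly whose domain is a subset of `P i` missing at most `c` points;
(2) for some constant `c'`, every producible assembly has a translate whose
domain is a subset of some stage `P i` missing at most `c'` points. -/
def NearPerfectlyAssembles (T : Finset Tile) (str : ℕ → ℕ) (τ h : ℕ)
    (P : ℕ → Finset (ℤ × ℤ)) : Prop :=
  SelfAssembles T str τ h (⋃ i, (P i : Set (ℤ × ℤ))) ∧
  (∃ c : ℕ, ∀ i : ℕ, ∃ A, HamProducible T str τ h A ∧ ∃ v : ℤ × ℤ,
      (A.translate v).dom ⊆ P i ∧ (P i \ (A.translate v).dom).card ≤ c) ∧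
  (∃ c' : ℕ, ∀ A, HamProducible T str τ h A → ∃ (v : ℤ × ℤ) (i : ℕ),
      (A.translate v).dom ⊆ P i ∧ (P i \ (A.translate v).dom).card ≤ c')

/-- Stages of the discrete (non-tree) Sierpinski triangle:
`S_0 = {(0,0),(-1,0),(0,1),(-1,1)}` and
`S_{i+1} = S_i ∪ (S_i + 2^i·(1,2)) ∪ (S_i + 2^i·(-1,2))`. -/
def sierpTri : ℕ → Finset (ℤ × ℤ)
  | 0 => {(0, 0), (-1, 0), (0, 1), (-1, 1)}
  | i + 1 =>
      sierpTri i ∪ (sierpTri i).image (· + ((2 : ℤ) ^ i, 2 ^ (i + 1))) ∪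
        (sierpTri i).image (· + (-(2 : ℤ) ^ i, 2 ^ (i + 1)))

/-- The discrete Sierpinski triangle `S_∞ = ⋃ i, S_i`. -/
def sierpTriInf : Set (ℤ × ℤ) := ⋃ i, (sierpTri i : Set (ℤ × ℤ))

/-- The offset set `V` for the Sierpinski carpet. -/
def carpetV : Finset (ℤ × ℤ) := {(1,0), (0,1), (0,2), (2,0), (1,2), (2,1), (2,2)}

/-- Stages of the discrete Sierpinski carpet:
`C_0 = {(0,0)}` and `C_{i+1} = C_i ∪ ⋃_{v ∈ V} (C_i + 3^i·v)`. -/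
def sierpCarpet : ℕ → Finset (ℤ × ℤ)
  | 0 => {(0, 0)}
  | i + 1 =>
      sierpCarpet i ∪ carpetV.biUnion fun v =>
        (sierpCarpet i).image (· + ((3 : ℤ) ^ i * v.1, (3 : ℤ) ^ i * v.2))

/-- The discrete Sierpinski carpet `C_∞ = ⋃ i, C_i`. -/
def sierpCarpetInf : Set (ℤ × ℤ) := ⋃ i, (sierpCarpet i : Set (ℤ × ℤ))

/-- The scale-factor-`c` version of a shape `X ⊆ ℤ²`: each point of `X` becomes a
`c × c` block (membership via floor division of both coordinates by `c`). -/
def scaleShape (c : ℤ) (X : Set (ℤ × ℤ)) : Set (ℤ × ℤ) :=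
  {p | (Int.fdiv p.1 c, Int.fdiv p.2 c) ∈ X}

lemma mem_carpetV_bounds (v : ℤ × ℤ) (hv : v ∈ carpetV) :
    0 ≤ v.1 ∧ v.1 ≤ 2 ∧ 0 ≤ v.2 ∧ v.2 ≤ 2 := by
  fin_cases hv <;> norm_num

lemma sierpCarpet_bounds : ∀ i, ∀ p ∈ sierpCarpet i,
    0 ≤ p.1 ∧ p.1 < 3 ^ i ∧ 0 ≤ p.2 ∧ p.2 < 3 ^ i := by
  intro i
  induction i with
  | zero =>
    intro p hp
    simp only [sierpCarpet, Finset.mem_singleton] at hp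
    subst hp; norm_num
  | succ i ih =>
    intro p hp
    have hpos : (0:ℤ) < 3 ^ i := by positivity
    have hsucc : (3:ℤ) ^ (i+1) = 3 ^ i * 3 := pow_succ 3 i
    simp only [sierpCarpet, Finset.mem_union, Finset.mem_biUnion, Finset.mem_image] at hp
    rcases hp with hp | ⟨v, hv, q, hq, rfl⟩
    · obtain ⟨h1, h2, h3, h4⟩ := ih p hp
      refine ⟨h1, by linarith, h3, by linarith⟩
    · obtain ⟨h1, h2, h3, h4⟩ := ih q hq
      obtain ⟨hv1, hv2, hv3, hv4⟩ := mem_carpetV_bounds v hv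
      have m1 : 3 ^ i * v.1 ≤ 3 ^ i * 2 := by nlinarith
      have m2 : 3 ^ i * v.2 ≤ 3 ^ i * 2 := by nlinarith
      have m3 : 0 ≤ 3 ^ i * v.1 := by positivity
      have m4 : 0 ≤ 3 ^ i * v.2 := by positivity
      constructor
      · show 0 ≤ q.1 + 3 ^ i * v.1; linarith
      constructor
      · show q.1 + 3 ^ i * v.1 < 3 ^ (i+1); linarith
      constructor
      · show 0 ≤ q.2 + 3 ^ i * v.2; linarith
      · show q.2 + 3 ^ i * v.2 < 3 ^ (i+1); linarith

lemma copies_disj (i : ℕ) (v w : ℤ × ℤ) (hne : v ≠ w) :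
    Disjoint ((sierpCarpet i).image (· + ((3:ℤ) ^ i * v.1, (3:ℤ) ^ i * v.2)))
             ((sierpCarpet i).image (· + ((3:ℤ) ^ i * w.1, (3:ℤ) ^ i * w.2))) := by
  rw [Finset.disjoint_left]
  rintro p hp hp'
  obtain ⟨q, hq, rfl⟩ := Finset.mem_image.mp hp
  obtain ⟨r, hr, heq⟩ := Finset.mem_image.mp hp'
  have hpos : (0:ℤ) < 3 ^ i := by positivity
  obtain ⟨q1, q2, q3, q4⟩ := sierpCarpet_bounds i q hq
  obtain ⟨r1, r2, r3, r4⟩ := sierpCarpet_bounds i r hr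
  have e1 : r.1 + 3 ^ i * w.1 = q.1 + 3 ^ i * v.1 := congrArg Prod.fst heq
  have e2 : r.2 + 3 ^ i * w.2 = q.2 + 3 ^ i * v.2 := congrArg Prod.snd heq
  apply hne
  have hv1 : v.1 = w.1 := by
    have l1 : 3 ^ i * (v.1 - w.1) < 3 ^ i * 1 := by rw [mul_sub, mul_one]; linarith
    have l2 : 3 ^ i * (w.1 - v.1) < 3 ^ i * 1 := by rw [mul_sub, mul_one]; linarith
    have := (mul_lt_mul_iff_right₀ hpos).mp l1
    have := (mul_lt_mul_iff_right₀ hpos).mp l2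
    omega
  have hv2 : v.2 = w.2 := by
    have l1 : 3 ^ i * (v.2 - w.2) < 3 ^ i * 1 := by rw [mul_sub, mul_one]; linarith
    have l2 : 3 ^ i * (w.2 - v.2) < 3 ^ i * 1 := by rw [mul_sub, mul_one]; linarith
    have := (mul_lt_mul_iff_right₀ hpos).mp l1
    have := (mul_lt_mul_iff_right₀ hpos).mp l2
    omega
  exact Prod.ext hv1 hv2

lemma sierpCarpet_card : ∀ i, (sierpCarpet i).card = 8 ^ i := by
  intro i
  induction i with
  | zero => rfl
  | succ i ih =>
    have hbase : sierpCarpet i =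
        (sierpCarpet i).image (· + ((3:ℤ) ^ i * (0:ℤ), (3:ℤ) ^ i * (0:ℤ))) := by
      simp [Prod.mk_zero_zero]
    have hinj : ∀ u : ℤ × ℤ, Function.Injective (· + u) := fun u => add_left_injective u
    have hd : Disjoint (sierpCarpet i) (carpetV.biUnion fun v =>
        (sierpCarpet i).image (· + ((3 : ℤ) ^ i * v.1, (3 : ℤ) ^ i * v.2))) := by
      rw [Finset.disjoint_biUnion_right]
      intro v hv
      have hne : ((0:ℤ),(0:ℤ)) ≠ v := by rintro rfl; revert hv; decide
      simpa [Prod.mk_zero_zero] using copies_disj i ((0:ℤ),(0:ℤ)) v hne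
    show (sierpCarpet i ∪ _).card = _
    rw [Finset.card_union_of_disjoint hd, Finset.card_biUnion
      (fun v hv w hw hne => copies_disj i v w hne)]
    have : ∀ v ∈ carpetV,
        ((sierpCarpet i).image (· + ((3 : ℤ) ^ i * v.1, (3 : ℤ) ^ i * v.2))).card = 8 ^ i := by
      intro v hv
      rw [Finset.card_image_of_injective _ (hinj _), ih]
    rw [Finset.sum_congr rfl this, Finset.sum_const, show carpetV.card = 7 from rfl,
      smul_eq_mul, ih, pow_succ]
    ring

-- continuation: assume everything in proof.lean's preamble
lemma translate_dom_card (A : Assembly) (v : ℤ × ℤ) :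
    (A.translate v).dom.card = A.dom.card :=
  Finset.card_image_of_injective _ (add_left_injective v)

/-- union of domains of a list of assemblies -/
def domsUnion (L : List Assembly) : Finset (ℤ × ℤ) :=
  L.foldr (fun A s => A.dom ∪ s) ∅

lemma mem_domsUnion {L : List Assembly} {p : ℤ × ℤ} :
    p ∈ domsUnion L ↔ ∃ A ∈ L, p ∈ A.dom := by
  induction L with
  | nil => simp [domsUnion]
  | cons A L ih => simp [domsUnion] at ih ⊢; rw [ih]

lemma domsUnion_card : ∀ {L : List Assembly},
    L.Pairwise (fun A B => Disjoint A.dom B.dom) →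
    (domsUnion L).card = (L.map fun A => A.dom.card).sum := by
  intro L
  induction L with
  | nil => intro _; simp [domsUnion]
  | cons A L ih =>
    intro hp
    rw [List.pairwise_cons] at hp
    have hd : Disjoint A.dom (domsUnion L) := by
      rw [Finset.disjoint_right]
      intro p hp' hpA
      obtain ⟨B, hB, hpB⟩ := mem_domsUnion.mp hp'
      exact Finset.disjoint_left.mp (hp.1 B hB) hpA hpB
    show (A.dom ∪ domsUnion L).card = _
    rw [Finset.card_union_of_disjoint hd, ih hp.2]
    simp

lemma combines_card {L : List Assembly} {C : Assembly} (h : Combines L C) :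
    C.dom.card = (L.map fun A => A.dom.card).sum := by
  obtain ⟨hpw, hcov, hsub⟩ := h
  rw [← domsUnion_card hpw]
  congr 1
  ext p
  rw [mem_domsUnion]
  constructor
  · intro hp
    exact hcov p hp
  · rintro ⟨A, hA, hpA⟩
    exact (hsub A hA).1 hpA

/-- Key counting lemma: if every producible assembly fits (up to translation)
into some carpet stage missing at most `c'` points, and `h ≤ 7`, then every
producible assembly has fewer than `8 ^ (c'+1) - c'` tiles. -/
lemma producible_card_bound (T : Finset Tile) (str : ℕ → ℕ) (τ h : ℕ) (hh : h ≤ 7) (c' : ℕ)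
    (fits : ∀ A, HamProducible T str τ h A → ∃ (v : ℤ × ℤ) (i : ℕ),
      (A.translate v).dom ⊆ sierpCarpet i ∧ (sierpCarpet i \ (A.translate v).dom).card ≤ c') :
    ∀ A, HamProducible T str τ h A → A.dom.card + c' < 8 ^ (c' + 1) := by
  have hK : c' < 8 ^ c' := Nat.lt_pow_self (by norm_num)
  have hp8 : 8 ^ (c' + 1) = 8 ^ c' * 8 := pow_succ 8 c'
  intro A hA
  induction hA with
  | single t ht p =>
    show ({p} : Finset (ℤ × ℤ)).card + c' < 8 ^ (c' + 1)
    rw [Finset.card_singleton]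
    omega
  | combine L C hlen hprod hcomb hstab ih =>
    have hcard := combines_card hcomb
    rw [List.map_map] at hcard
    have hel : ∀ n ∈ L.map ((fun A => A.dom.card) ∘ fun x => x.1.translate x.2),
        n ≤ 8 ^ c' := by
      intro n hn
      obtain ⟨x, hx, rfl⟩ := List.mem_map.mp hn
      show (x.1.translate x.2).dom.card ≤ 8 ^ c'
      rw [translate_dom_card]
      obtain ⟨v, i, hsub, hmiss⟩ := fits x.1 (hprod x hx)
      have h1 : (x.1.translate v).dom.card ≤ 8 ^ i := by
        calc (x.1.translate v).dom.card ≤ (sierpCarpet i).card := Finset.card_le_card hsub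
          _ = 8 ^ i := sierpCarpet_card i
      have h2 : 8 ^ i ≤ (x.1.translate v).dom.card + c' := by
        have := Finset.card_sdiff_add_card_eq_card hsub
        have hc := sierpCarpet_card i
        omega
      rw [translate_dom_card] at h1 h2
      have hih := ih x hx
      have hi : i ≤ c' := by
        by_contra hcon
        have : 8 ^ (c' + 1) ≤ 8 ^ i := Nat.pow_le_pow_right (by norm_num) (by omega)
        omega
      exact h1.trans (Nat.pow_le_pow_right (by norm_num) hi)
    have hsum : C.dom.card ≤ L.length * 8 ^ c' := by
      rw [hcard]
      have := List.sum_le_card_nsmul _ _ hel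
      simpa using this
    have hlen7 : L.length ≤ 7 := hlen.trans hh
    have : C.dom.card ≤ 7 * 8 ^ c' :=
      hsum.trans (Nat.mul_le_mul_right _ hlen7)
    omega

/-- For every `h < 8`, no `h`-HAM system near-perfectly
assembles the discrete Sierpinski carpet `C_∞` with respect to its stage
sequence: at least 8 hands are required. -/
theorem sierpinski_carpet_near_perfect_needs_eight_hands :
    ∀ h : ℕ, 0 < h → h < 8 →
      ∀ (T : Finset Tile) (str : ℕ → ℕ) (τ : ℕ),
        str 0 = 0 → 0 < τ →
        ¬ NearPerfectlyAssembles T str τ h sierpCarpet := by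
  intro h h0 h8 T str τ hstr hτ hnp
  obtain ⟨-, ⟨c, h1⟩, ⟨c', h2⟩⟩ := hnp
  have hbound := producible_card_bound T str τ h (by omega) c' h2
  obtain ⟨A, hA, v, hsub, hmiss⟩ := h1 (c + c' + 1)
  have hb := hbound A hA
  rw [← translate_dom_card A v] at hb
  have hfull : 8 ^ (c + c' + 1) ≤ (A.translate v).dom.card + c := by
    have := Finset.card_sdiff_add_card_eq_card hsub
    have hc := sierpCarpet_card (c + c' + 1)
    omega
  have hc8 : c + 1 ≤ 8 ^ c := Nat.lt_pow_self (by norm_num)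
  have hK1 : 1 ≤ 8 ^ (c' + 1) := Nat.one_le_pow _ _ (by norm_num)
  have hbig : c + 8 ^ (c' + 1) ≤ 8 ^ (c + c' + 1) := by
    calc c + 8 ^ (c' + 1) ≤ c * 8 ^ (c' + 1) + 8 ^ (c' + 1) := by
          have : c * 1 ≤ c * 8 ^ (c' + 1) := Nat.mul_le_mul_left c hK1
          omega
      _ = (c + 1) * 8 ^ (c' + 1) := by ring
      _ ≤ 8 ^ c * 8 ^ (c' + 1) := Nat.mul_le_mul_right _ hc8
      _ = 8 ^ (c + c' + 1) := by rw [← pow_add, ← add_assoc]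
  linarith
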